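/- Let A ∈ ℂ^{d×d} be Hermitian, b ∈ ℂ^d, and t ≥ 1. Suppose x ∈ K_t(A, b), let r = b − A x, and assume r ≠ 0 and that r is orthogonal to the subspace A·K_t(A, b) = span_ℂ{Ab, A²b, …, A^t b} (the Petrov–Galerkin condition satisfied by the t-th MINRES iterate, i.e., ⟨r, A v⟩ = 0 for all v ∈ K_t(A, b)). Then the lifted vector x − (⟨r, x⟩ / ‖r‖²) · r equals the orthogonal projection of x onto the subspace A·K_t(A, b). -/

import Mathlib

open Matrix
open scoped InnerProductSpace ComplexConjugate

/-- The Krylov subspace `K_t(A, b) = span {b, Ab, …, A^{t-1} b}`,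
as a subspace of the Euclidean space `ℂ^d`. -/
noncomputable def Krylov {d : ℕ}
    (A : Matrix (Fin d) (Fin d) ℂ) (b : EuclideanSpace ℂ (Fin d)) (t : ℕ) :
    Submodule ℂ (EuclideanSpace ℂ (Fin d)) :=
  Submodule.span ℂ {v | ∃ i < t, v = Matrix.toEuclideanLin (A ^ i) b}

lemma toEuclideanLin_mul' {d : ℕ} (A B : Matrix (Fin d) (Fin d) ℂ)
    (v : EuclideanSpace ℂ (Fin d)) :
    Matrix.toEuclideanLin (A * B) v = Matrix.toEuclideanLin A (Matrix.toEuclideanLin B v) := by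
  simp [Matrix.toEuclideanLin_apply, Matrix.mulVec_mulVec]

lemma krylov_le {d : ℕ}
    (A : Matrix (Fin d) (Fin d) ℂ) (b : EuclideanSpace ℂ (Fin d)) (t : ℕ) (ht : 1 ≤ t) :
    Krylov A b t ≤ Submodule.span ℂ {b} ⊔ (Krylov A b t).map (Matrix.toEuclideanLin A) := by
  rw [Krylov, Submodule.span_le]
  rintro v ⟨i, hi, rfl⟩
  rcases Nat.eq_zero_or_pos i with rfl | hpos
  · apply Submodule.mem_sup_left
    simp [Submodule.mem_span_singleton]
  · apply Submodule.mem_sup_right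
    refine ⟨Matrix.toEuclideanLin (A ^ (i-1)) b, ?_, ?_⟩
    · exact Submodule.subset_span ⟨i - 1, by omega, rfl⟩
    · have hi' : A ^ i = A * A ^ (i - 1) := by
        nth_rewrite 1 [show i = (i - 1) + 1 by omega]
        rw [pow_succ']
      rw [hi', toEuclideanLin_mul']

/-- The lifted MINRES iterate is the orthogonal projection of `x` onto `A · K_t(A,b)`. -/
theorem lifting_is_orthogonal_projection {d : ℕ}
    (A : Matrix (Fin d) (Fin d) ℂ) (b x r : EuclideanSpace ℂ (Fin d)) (t : ℕ)
    (ht : 1 ≤ t)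
    (hA : A.IsHermitian)
    (hx : x ∈ Krylov A b t)
    (hr : r = b - Matrix.toEuclideanLin A x)
    (hrne : r ≠ 0)
    (horth : ∀ v ∈ Krylov A b t, ⟪r, Matrix.toEuclideanLin A v⟫_ℂ = 0) :
    x - (⟪r, x⟫_ℂ / ((‖r‖ : ℂ) ^ 2)) • r =
      (Submodule.orthogonalProjectionOnto ((Krylov A b t).map (Matrix.toEuclideanLin A)) x :
        EuclideanSpace ℂ (Fin d)) := by
  set W := (Krylov A b t).map (Matrix.toEuclideanLin A) with hW
  set c : ℂ := ⟪r, x⟫_ℂ / ((‖r‖ : ℂ) ^ 2) with hc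
  have hrW : ∀ w ∈ W, ⟪r, w⟫_ℂ = 0 := by
    rintro w ⟨v, hv, rfl⟩
    exact horth v hv
  -- decomposition x = α • b + w
  obtain ⟨y, hy, w, hw, hxd⟩ := Submodule.mem_sup.mp (krylov_le A b t ht hx)
  obtain ⟨α, rfl⟩ := Submodule.mem_span_singleton.mp hy
  -- ⟪r, b⟫ = ‖r‖²
  have hAxW : Matrix.toEuclideanLin A x ∈ W := ⟨x, hx, rfl⟩
  have hrb : ⟪r, b⟫_ℂ = (‖r‖ : ℂ) ^ 2 := by
    have := hrW _ hAxW
    have h2 : ⟪r, r⟫_ℂ = ⟪r, b⟫_ℂ - ⟪r, Matrix.toEuclideanLin A x⟫_ℂ := by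
      rw [hr, inner_sub_right]
    rw [this, sub_zero] at h2
    rw [← h2, inner_self_eq_norm_sq_to_K]
    norm_num
  have hrnorm : (‖r‖ : ℂ) ^ 2 ≠ 0 := by
    simpa using hrne
  have hcα : c = α := by
    have : ⟪r, x⟫_ℂ = α * (‖r‖ : ℂ) ^ 2 := by
      rw [← hxd, inner_add_right, inner_smul_right, hrb, hrW _ hw, add_zero]
    rw [hc, this, mul_div_assoc, div_self hrnorm, mul_one]
  -- membership
  have hmem : x - c • r ∈ W := by
    have : x - c • r = w + c • (Matrix.toEuclideanLin A x) := by
      rw [hr, hcα, ← hxd]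
      module
    rw [this]
    exact W.add_mem hw (W.smul_mem _ hAxW)
  symm
  rw [Submodule.coe_orthogonalProjectionOnto_apply]
  apply Submodule.eq_starProjection_of_mem_of_inner_eq_zero hmem
  intro u hu
  have : x - (x - c • r) = c • r := by module
  rw [this]
  simp [inner_smul_left, hrW u hu]
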